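/- For every natural number k ≥ 1, the matrix identity c_kᵀ · c_k + d_kᵀ · d_k = I holds, where I is the (k+1)×(k+1) identity matrix; equivalently, the 2k×(k+1) block matrix obtained by stacking c_k on top of d_k has pairwise orthonormal columns, i.e., it is an isometry. -/

import Mathlib

open Matrix

/-- The `k × (k+1)` lowering matrix `c_k`, with entries
`c_k[β,β] = √(k−β)/√(2k)`, `c_k[β,β+1] = √(β+1)/√(2k)`, and `0` otherwise. -/
noncomputable def cmat (k : ℕ) : Matrix (Fin k) (Fin (k+1)) ℝ :=
  fun β α =>
    if (α : ℕ) = (β : ℕ) then Real.sqrt ((k : ℝ) - (β : ℕ)) / Real.sqrt (2 * (k : ℝ))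
    else if (α : ℕ) = (β : ℕ) + 1 then Real.sqrt (((β : ℕ) : ℝ) + 1) / Real.sqrt (2 * (k : ℝ))
    else 0

/-- The `k × (k+1)` lowering matrix `d_k`, with entries
`d_k[β,β] = √(k−β)/√(2k)`, `d_k[β,β+1] = −√(β+1)/√(2k)`, and `0` otherwise. -/
noncomputable def dmat (k : ℕ) : Matrix (Fin k) (Fin (k+1)) ℝ :=
  fun β α =>
    if (α : ℕ) = (β : ℕ) then Real.sqrt ((k : ℝ) - (β : ℕ)) / Real.sqrt (2 * (k : ℝ))
    else if (α : ℕ) = (β : ℕ) + 1 then -Real.sqrt (((β : ℕ) : ℝ) + 1) / Real.sqrt (2 * (k : ℝ))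
    else 0

/-- For `k ≥ 1`, `c_kᵀ c_k + d_kᵀ d_k = I`: the `2k × (k+1)` block matrix obtained by
stacking `c_k` on top of `d_k` has orthonormal columns, i.e. it is an isometry. -/
theorem cmat_dmat_isometry (k : ℕ) (hk : 1 ≤ k) :
    (cmat k)ᵀ * cmat k + (dmat k)ᵀ * dmat k = 1 := by
  have hkR : (1:ℝ) ≤ (k:ℝ) := by exact_mod_cast hk
  have hk0 : (k:ℝ) ≠ 0 := by linarith
  have hs : Real.sqrt (2 * (k:ℝ)) * Real.sqrt (2 * (k:ℝ)) = 2 * k :=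
    Real.mul_self_sqrt (by linarith)
  ext α α'
  simp only [Matrix.add_apply, Matrix.mul_apply, Matrix.transpose_apply, Matrix.one_apply]
  rw [← Finset.sum_add_distrib]
  have hterm : ∀ β : Fin k,
      cmat k β α * cmat k β α' + dmat k β α * dmat k β α'
      = (if (α:ℕ) = (β:ℕ) ∧ (α':ℕ) = (β:ℕ) then ((k:ℝ) - (β:ℕ)) / k else 0)
        + (if (α:ℕ) = (β:ℕ)+1 ∧ (α':ℕ) = (β:ℕ)+1 then (((β:ℕ):ℝ) + 1) / k else 0) := by
    intro β
    have hb : ((β:ℕ):ℝ) ≤ (k:ℝ) - 1 := by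
      have := β.isLt
      have : ((β:ℕ):ℝ) ≤ (k:ℝ) - 1 := by
        have h' : (β:ℕ) + 1 ≤ k := β.isLt
        have : ((β:ℕ):ℝ) + 1 ≤ (k:ℝ) := by exact_mod_cast h'
        linarith
      exact this
    have h1 : Real.sqrt ((k:ℝ) - (β:ℕ)) * Real.sqrt ((k:ℝ) - (β:ℕ)) = (k:ℝ) - (β:ℕ) :=
      Real.mul_self_sqrt (by linarith)
    have h2 : Real.sqrt (((β:ℕ):ℝ) + 1) * Real.sqrt (((β:ℕ):ℝ) + 1) = ((β:ℕ):ℝ) + 1 :=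
      Real.mul_self_sqrt (by positivity)
    simp only [cmat, dmat]
    split_ifs <;>
      first
        | (exfalso; omega)
        | ring1
        | (simp only [div_mul_div_comm, neg_mul_neg, h1, h2, hs, add_zero, zero_add,
                      ← add_div]
           rw [div_eq_div_iff (by positivity) hk0]
           ring1)
  rw [Finset.sum_congr rfl (fun β _ => hterm β), Finset.sum_add_distrib]
  by_cases hαα : α = α'
  · subst hαα
    rw [if_pos rfl]
    have hsum1 : (∑ β : Fin k, if (α:ℕ) = (β:ℕ) ∧ (α:ℕ) = (β:ℕ) then ((k:ℝ) - (β:ℕ)) / k else 0)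
        = if (α:ℕ) < k then ((k:ℝ) - (α:ℕ)) / k else 0 := by
      simp only [and_self]
      rw [Fin.sum_univ_eq_sum_range (fun i => if (α:ℕ) = i then ((k:ℝ) - i) / k else 0)]
      rw [Finset.sum_ite_eq (Finset.range k) (α:ℕ) (fun i => ((k:ℝ) - i) / k)]
      simp [Finset.mem_range]
    have hsum2 : (∑ β : Fin k, if (α:ℕ) = (β:ℕ)+1 ∧ (α:ℕ) = (β:ℕ)+1 then (((β:ℕ):ℝ) + 1) / k else 0)
        = if 1 ≤ (α:ℕ) then ((α:ℕ):ℝ) / k else 0 := by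
      simp only [and_self]
      rcases Nat.eq_zero_or_pos (α:ℕ) with h0 | h0
      · rw [h0]
        simp
      · obtain ⟨m, hm⟩ : ∃ m, (α:ℕ) = m + 1 := ⟨(α:ℕ) - 1, by omega⟩
        have hmk : m < k := by have := α.isLt; omega
        rw [if_pos (show 1 ≤ (α:ℕ) from h0)]
        have : ∀ β : Fin k, (if (α:ℕ) = (β:ℕ)+1 then (((β:ℕ):ℝ) + 1) / k else 0)
            = if m = (β:ℕ) then (((β:ℕ):ℝ) + 1) / k else 0 := by
          intro β
          congr 1
          simp only [eq_iff_iff]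
          omega
        rw [Finset.sum_congr rfl (fun β _ => this β)]
        rw [Fin.sum_univ_eq_sum_range (fun i => if m = i then ((i:ℝ) + 1) / k else 0)]
        rw [Finset.sum_ite_eq (Finset.range k) m (fun i => ((i:ℝ) + 1) / k)]
        rw [if_pos (Finset.mem_range.mpr hmk), hm]
        push_cast
        ring
    rw [hsum1, hsum2]
    have hak : (α:ℕ) ≤ k := by have := α.isLt; omega
    rcases Nat.eq_zero_or_pos (α:ℕ) with h0 | h0
    · rw [h0]
      simp only [Nat.cast_zero, sub_zero]
      rw [if_pos (show (0:ℕ) < k from hk), if_neg (by omega)]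
      field_simp
      ring
    · rcases eq_or_lt_of_le hak with hk' | hk'
      · rw [if_neg (by omega), if_pos (show 1 ≤ (α:ℕ) from h0), hk']
        field_simp
        ring
      · rw [if_pos hk', if_pos (show 1 ≤ (α:ℕ) from h0)]
        field_simp
        ring
  · have hne : (α:ℕ) ≠ (α':ℕ) := fun h => hαα (Fin.ext h)
    rw [if_neg hαα]
    rw [Finset.sum_eq_zero, Finset.sum_eq_zero, add_zero]
    · intro β _
      rw [if_neg (by omega)]
    · intro β _
      rw [if_neg (by omega)]
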